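/- The 5×5 symmetric matrix T with zero diagonal, T_{12}=T_{13}=T_{14}=7, T_{15}=13, T_{23}=T_{24}=T_{34}=12, T_{25}=T_{35}=T_{45}=7 cannot be realized as a matrix of squared Euclidean distances: there is no map f from {1,...,5} to any Euclidean space with ‖f(i)−f(j)‖² = T_{ij} for all i,j. -/

import Mathlib

set_option maxHeartbeats 800000


/-- The given 5×5 matrix of "squared distances" is not realizable as the
matrix of squared Euclidean distances of 5 points in any Euclidean space. -/
theorem counterexample_not_realizable :
    ¬ ∃ (d : ℕ) (f : Fin 5 → EuclideanSpace ℝ (Fin d)),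
      ∀ i j, ‖f i - f j‖ ^ 2 =
        (!![0, 7, 7, 7, 13;
            7, 0, 12, 12, 7;
            7, 12, 0, 12, 7;
            7, 12, 12, 0, 7;
            13, 7, 7, 7, 0] : Matrix (Fin 5) (Fin 5) ℝ) i j := by
  rintro ⟨d, f, hf⟩
  have key : ∀ i j : Fin 5,
      ‖f i‖ ^ 2 - 2 * (inner ℝ (f i) (f j) : ℝ) + ‖f j‖ ^ 2 =
        (!![0, 7, 7, 7, 13;
            7, 0, 12, 12, 7;
            7, 12, 0, 12, 7;
            7, 12, 12, 0, 7;
            13, 7, 7, 7, 0] : Matrix (Fin 5) (Fin 5) ℝ) i j := by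
    intro i j
    rw [← hf i j, ← norm_sub_sq_real]
  have h01 := key 0 1
  have h02 := key 0 2
  have h03 := key 0 3
  have h04 := key 0 4
  have h12 := key 1 2
  have h13 := key 1 3
  have h14 := key 1 4
  have h23 := key 2 3
  have h24 := key 2 4
  have h34 := key 3 4
  simp only [Matrix.cons_val', Matrix.cons_val_zero, Matrix.cons_val_one, Matrix.head_cons,
    Matrix.empty_val', Matrix.cons_val_fin_one, Matrix.head_fin_const, Matrix.of_apply,
    Matrix.cons_val_succ, Matrix.cons_val_two, Matrix.cons_val_three, Matrix.cons_val_four,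
    Matrix.tail_cons, Fin.isValue] at h01 h02 h03 h04 h12 h13 h14 h23 h24 h34
  set v : EuclideanSpace ℝ (Fin d) :=
    (3/2 : ℝ) • f 0 - f 1 - f 2 - f 3 + (3/2 : ℝ) • f 4 with hv
  have hnn : (0:ℝ) ≤ ‖v‖ ^ 2 := sq_nonneg _
  rw [← real_inner_self_eq_norm_sq] at hnn
  simp only [hv, inner_add_left, inner_add_right, inner_sub_left, inner_sub_right,
    inner_smul_left, inner_smul_right, real_inner_comm (f 1) (f 0), real_inner_comm (f 2) (f 0),
    real_inner_comm (f 3) (f 0), real_inner_comm (f 4) (f 0), real_inner_comm (f 2) (f 1),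
    real_inner_comm (f 3) (f 1), real_inner_comm (f 4) (f 1), real_inner_comm (f 3) (f 2),
    real_inner_comm (f 4) (f 2), real_inner_comm (f 4) (f 3), RCLike.conj_to_real] at hnn
  have n0 := real_inner_self_eq_norm_sq (f 0)
  have n1 := real_inner_self_eq_norm_sq (f 1)
  have n2 := real_inner_self_eq_norm_sq (f 2)
  have n3 := real_inner_self_eq_norm_sq (f 3)
  have n4 := real_inner_self_eq_norm_sq (f 4)
  have c01 : (inner ℝ (f 1) (f 0) : ℝ) = inner ℝ (f 0) (f 1) := real_inner_comm _ _
  have c02 : (inner ℝ (f 2) (f 0) : ℝ) = inner ℝ (f 0) (f 2) := real_inner_comm _ _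
  have c03 : (inner ℝ (f 3) (f 0) : ℝ) = inner ℝ (f 0) (f 3) := real_inner_comm _ _
  have c04 : (inner ℝ (f 4) (f 0) : ℝ) = inner ℝ (f 0) (f 4) := real_inner_comm _ _
  have c12 : (inner ℝ (f 2) (f 1) : ℝ) = inner ℝ (f 1) (f 2) := real_inner_comm _ _
  have c13 : (inner ℝ (f 3) (f 1) : ℝ) = inner ℝ (f 1) (f 3) := real_inner_comm _ _
  have c14 : (inner ℝ (f 4) (f 1) : ℝ) = inner ℝ (f 1) (f 4) := real_inner_comm _ _
  have c23 : (inner ℝ (f 3) (f 2) : ℝ) = inner ℝ (f 2) (f 3) := real_inner_comm _ _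
  have c24 : (inner ℝ (f 4) (f 2) : ℝ) = inner ℝ (f 2) (f 4) := real_inner_comm _ _
  have c34 : (inner ℝ (f 4) (f 3) : ℝ) = inner ℝ (f 3) (f 4) := real_inner_comm _ _
  linarith [hnn, h01, h02, h03, h04, h12, h13, h14, h23, h24, h34, n0, n1, n2, n3, n4,
    c01, c02, c03, c04, c12, c13, c14, c23, c24, c34]
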